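/- There exists a universal constant c > 0 such that the following holds for all integers d, t ≥ 1 and Δ, Ξ ≥ 1. Let D ∈ ℤ^{d×t} have all entries of absolute value at most Δ, let b ∈ ℤ^d satisfy ‖b‖_∞ ≤ Ξ, and let x ∈ ℤ_{≥0}^t satisfy Dx = b. Then there exist a vector x̄ ∈ ℤ_{≥0}^t with Dx̄ = b and ‖x̄‖_∞ ≤ (c·d·(Δ+Ξ))^d, and a finite multiset μ of elements of 𝒢(D) ∩ ℤ_{≥0}^t, such that x = x̄ + Σ_{g ∈ 𝒢(D) ∩ ℤ_{≥0}^t} μ_g · g. -/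

import Mathlib

open Finset

/-- The Graver basis of `D ∈ ℤ^{d×t}`: the set of nonzero integer vectors in the
kernel of `D` that are minimal under the conformal order `⊑`
(`x ⊑ y` iff `xᵢyᵢ ≥ 0` and `|xᵢ| ≤ |yᵢ|` for all `i`). -/
def Graver {d t : ℕ} (D : Matrix (Fin d) (Fin t) ℤ) : Set (Fin t → ℤ) :=
  {g | g ≠ 0 ∧ D.mulVec g = 0 ∧
    ∀ h : Fin t → ℤ, h ≠ 0 → D.mulVec h = 0 →
      (∀ i, 0 ≤ h i * g i ∧ |h i| ≤ |g i|) → h = g}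



lemma exists_kernel_vec {n d' : ℕ} (v : Fin n → Fin d' → ℚ) (F : Finset (Fin n))
    (hF : d' + 1 < F.card) :
    ∃ w : Fin n → ℚ, w ≠ 0 ∧ (∀ i ∉ F, w i = 0) ∧ (∑ i, w i = 0) ∧
      ∀ j, ∑ i, w i * v i j = 0 := by
  classical
  let L : (↥F → ℚ) →ₗ[ℚ] ((Fin d' → ℚ) × ℚ) :=
    { toFun := fun f => (fun j => ∑ i : ↥F, f i * v i j, ∑ i : ↥F, f i)
      map_add' := by
        intro f g
        ext j <;> simp [add_mul, Finset.sum_add_distrib]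
      map_smul' := by
        intro c f
        ext j <;> simp [Finset.mul_sum, mul_assoc]
      }
  have hrd : Module.finrank ℚ (↥F → ℚ) = F.card := by
    simp [Module.finrank_pi]
  have hrc : Module.finrank ℚ ((Fin d' → ℚ) × ℚ) = d' + 1 := by
    simp [Module.finrank_pi]
  have hker : ¬ Function.Injective L := by
    intro h
    have := LinearMap.finrank_le_finrank_of_injective h
    rw [hrd, hrc] at this
    omega
  rw [← LinearMap.ker_eq_bot] at hker
  obtain ⟨f, hf, hf0⟩ := Submodule.exists_mem_ne_zero_of_ne_bot hker
  have hfst := congrFun (congrArg Prod.fst (LinearMap.mem_ker.mp hf))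
  have hsnd := congrArg Prod.snd (LinearMap.mem_ker.mp hf)
  simp only [L, LinearMap.coe_mk, AddHom.coe_mk, Prod.fst, Prod.snd] at hfst hsnd
  refine ⟨fun i => if h : i ∈ F then f ⟨i, h⟩ else 0, ?_, ?_, ?_, ?_⟩
  · intro h
    apply hf0
    ext ⟨i, hi⟩
    have := congrFun h i
    simpa [hi] using this
  · intro i hi; simp [hi]
  · rw [← Finset.sum_subset (Finset.subset_univ F) (by intro i _ hi; simp [hi])]
    rw [← Finset.sum_attach F]
    simpa using hsnd
  · intro j
    rw [← Finset.sum_subset (Finset.subset_univ F) (by intro i _ hi; simp [hi])]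
    rw [← Finset.sum_attach F (fun i => (if h : i ∈ F then f ⟨i, h⟩ else 0) * v i j)]
    have := hfst j
    simpa using this


lemma base_zero {n d' : ℕ} (A : Finset (Fin n)) (μ : Fin n → ℚ)
    (hcard : (A.filter (fun i => μ i ≠ 0 ∧ μ i ≠ 1)).card ≤ d' + 1)
    (h01 : ∀ i, 0 ≤ μ i ∧ μ i ≤ 1) (hsupp : ∀ i ∉ A, μ i = 0)
    (hsum : (∑ i, μ i) = (A.card : ℚ) - d' - 1) :
    ∃ i ∈ A, μ i = 0 := by
  classical
  by_contra hno
  push_neg at hno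
  set F := A.filter (fun i => μ i ≠ 0 ∧ μ i ≠ 1) with hF
  set O := A.filter (fun i => μ i = 1) with hO
  have hsplit : A = O ∪ F := by
    ext i
    simp only [hO, hF, Finset.mem_union, Finset.mem_filter]
    constructor
    · intro hi
      by_cases h1 : μ i = 1
      · exact Or.inl ⟨hi, h1⟩
      · exact Or.inr ⟨hi, hno i hi, h1⟩
    · rintro (⟨hi, _⟩ | ⟨hi, _⟩) <;> exact hi
  have hdisj : Disjoint O F := by
    rw [Finset.disjoint_left]
    intro i hi hi'
    rw [hO, Finset.mem_filter] at hi
    rw [hF, Finset.mem_filter] at hi'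
    exact hi'.2.2 hi.2
  -- sum over univ = sum over A
  have hsumA : (∑ i ∈ A, μ i) = (A.card : ℚ) - d' - 1 := by
    rw [← hsum]
    exact Finset.sum_subset (Finset.subset_univ A) (by intro i _ hi; exact hsupp i hi)
  have hcardsplit : A.card = O.card + F.card := by
    rw [hsplit, Finset.card_union_of_disjoint hdisj]
  have hsumO : (∑ i ∈ O, μ i) = (O.card : ℚ) := by
    rw [Finset.sum_congr rfl (fun i hi => (Finset.mem_filter.mp hi).2)]
    simp [hO]
  have hsumF : (∑ i ∈ F, μ i) = (F.card : ℚ) - d' - 1 := by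
    have := Finset.sum_union hdisj (f := μ)
    rw [← hsplit] at this
    rw [this, hsumO] at hsumA
    have : (O.card : ℚ) + F.card = A.card := by exact_mod_cast congrArg (Nat.cast (R := ℚ)) hcardsplit |>.symm
    linarith
  have hFnonneg : 0 ≤ ∑ i ∈ F, μ i := Finset.sum_nonneg (fun i _ => (h01 i).1)
  have hFle : (F.card : ℚ) - d' - 1 ≤ 0 := by
    have : (F.card : ℚ) ≤ (d' : ℚ) + 1 := by exact_mod_cast hcard
    linarith
  have hFzero : ∀ i ∈ F, μ i = 0 := by
    rw [← Finset.sum_eq_zero_iff_of_nonneg (fun i _ => (h01 i).1)]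
    linarith
  have hFempty : F = ∅ := by
    rw [Finset.eq_empty_iff_forall_notMem]
    intro i hi
    exact (Finset.mem_filter.mp hi).2.1 (hFzero i hi)
  rw [hFempty] at hsumF
  simp at hsumF
  have : (0:ℚ) ≤ (d' : ℚ) := by positivity
  linarith

lemma tighten {n d' : ℕ} (v : Fin n → Fin d' → ℚ) :
    ∀ (k : ℕ) (A : Finset (Fin n)) (μ : Fin n → ℚ),
    (A.filter (fun i => μ i ≠ 0 ∧ μ i ≠ 1)).card ≤ k →
    (∀ i, 0 ≤ μ i ∧ μ i ≤ 1) → (∀ i ∉ A, μ i = 0) →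
    (∑ i, μ i) = (A.card : ℚ) - d' - 1 →
    (∀ j, ∑ i, μ i * v i j = 0) →
    ∃ μ' : Fin n → ℚ, (∀ i, 0 ≤ μ' i ∧ μ' i ≤ 1) ∧ (∀ i ∉ A, μ' i = 0) ∧
      (∑ i, μ' i) = (A.card : ℚ) - d' - 1 ∧ (∀ j, ∑ i, μ' i * v i j = 0) ∧
      ∃ i ∈ A, μ' i = 0 := by
  classical
  intro k
  induction k with
  | zero =>
    intro A μ hk h01 hsupp hsum hker
    exact ⟨μ, h01, hsupp, hsum, hker, base_zero A μ (le_trans hk (by omega)) h01 hsupp hsum⟩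
  | succ k ih =>
    intro A μ hk h01 hsupp hsum hker
    set F := A.filter (fun i => μ i ≠ 0 ∧ μ i ≠ 1) with hFdef
    by_cases hc : F.card ≤ d' + 1
    · exact ⟨μ, h01, hsupp, hsum, hker, base_zero A μ hc h01 hsupp hsum⟩
    · push_neg at hc
      obtain ⟨w, hw0, hwsupp, hwsum, hwker⟩ := exists_kernel_vec v F hc
      -- the F-membership facts
      have hFfrac : ∀ i ∈ F, 0 < μ i ∧ μ i < 1 := by
        intro i hi
        rw [hFdef, Finset.mem_filter] at hi
        exact ⟨lt_of_le_of_ne (h01 i).1 (Ne.symm hi.2.1), lt_of_le_of_ne (h01 i).2 hi.2.2⟩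
      -- ratio function
      set r : Fin n → ℚ := fun i => if 0 < w i then (1 - μ i) / w i else μ i / (-w i) with hrdef
      have hrval : ∀ i, r i = if 0 < w i then (1 - μ i) / w i else μ i / (-w i) := fun i => rfl
      set G := F.filter (fun i => w i ≠ 0) with hGdef
      have hGne : G.Nonempty := by
        obtain ⟨i0, hi0⟩ := Function.ne_iff.mp hw0
        refine ⟨i0, ?_⟩
        rw [hGdef, Finset.mem_filter]
        refine ⟨?_, by simpa using hi0⟩
        by_contra hi0F
        exact hi0 (by simpa using hwsupp i0 hi0F)
      set c := G.inf' hGne r with hcdef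
      have hrpos : ∀ i ∈ G, 0 < r i := by
        intro i hi
        rw [hGdef, Finset.mem_filter] at hi
        obtain ⟨h0, h1⟩ := hFfrac i hi.1
        rw [hrval]
        rcases lt_or_gt_of_ne hi.2 with hneg | hpos
        · rw [if_neg (by linarith)]
          exact div_pos h0 (by linarith)
        · rw [if_pos hpos]
          exact div_pos (by linarith) hpos
      have hcpos : 0 < c := by
        rw [hcdef, Finset.lt_inf'_iff]
        exact fun i hi => hrpos i hi
      have hcle : ∀ i ∈ G, c ≤ r i := fun i hi => Finset.inf'_le r hi
      set μ' : Fin n → ℚ := fun i => μ i + c * w i with hμ'def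
      -- outside G, μ' = μ
      have hsame : ∀ i ∉ G, μ' i = μ i := by
        intro i hi
        have hwz : w i = 0 := by
          by_cases hiF : i ∈ F
          · by_contra h
            exact hi (by rw [hGdef, Finset.mem_filter]; exact ⟨hiF, h⟩)
          · exact hwsupp i hiF
        simp [hμ'def, hwz]
      have h01' : ∀ i, 0 ≤ μ' i ∧ μ' i ≤ 1 := by
        intro i
        by_cases hi : i ∈ G
        · obtain ⟨h0, h1⟩ := hFfrac i (Finset.mem_filter.mp hi).1
          have hrc := hcle i hi
          have hwne : w i ≠ 0 := (Finset.mem_filter.mp hi).2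
          rcases lt_or_gt_of_ne hwne with hneg | hpos
          · have : r i = μ i / (-w i) := by rw [hrval, if_neg (by linarith)]
            rw [this] at hrc
            have h1' : c * (-w i) ≤ μ i := by
              have := mul_le_mul_of_nonneg_right hrc (le_of_lt (by linarith : (0:ℚ) < -w i))
              rwa [div_mul_cancel₀ _ (by linarith : (-w i) ≠ 0)] at this
            constructor
            · simp only [hμ'def]; nlinarith
            · simp only [hμ'def]; nlinarith
          · have : r i = (1 - μ i) / w i := by rw [hrval, if_pos hpos]
            rw [this] at hrc
            have h1' : c * w i ≤ 1 - μ i := by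
              have := mul_le_mul_of_nonneg_right hrc (le_of_lt hpos)
              rwa [div_mul_cancel₀ _ (ne_of_gt hpos)] at this
            constructor
            · simp only [hμ'def]; nlinarith
            · simp only [hμ'def]; linarith
        · rw [hsame i hi]; exact h01 i
      have hsupp' : ∀ i ∉ A, μ' i = 0 := by
        intro i hi
        have : i ∉ G := by
          intro hiG
          exact hi (Finset.mem_of_mem_filter i (Finset.mem_filter.mp hiG).1)
        rw [hsame i this]; exact hsupp i hi
      have hsum' : (∑ i, μ' i) = (A.card : ℚ) - d' - 1 := by
        simp only [hμ'def]
        rw [Finset.sum_add_distrib, ← Finset.mul_sum, hwsum, hsum]; ring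
      have hker' : ∀ j, ∑ i, μ' i * v i j = 0 := by
        intro j
        simp only [hμ'def]
        have : ∀ i, (μ i + c * w i) * v i j = μ i * v i j + c * (w i * v i j) := by
          intro i; ring
        rw [Finset.sum_congr rfl (fun i _ => this i), Finset.sum_add_distrib, ← Finset.mul_sum]
        rw [hker j]
        rw [show (∑ i, w i * v i j) = 0 from hwker j]
        ring
      -- the minimizer becomes tight
      obtain ⟨istar, histar, hmin⟩ := Finset.exists_mem_eq_inf' hGne r
      have hwne : w istar ≠ 0 := (Finset.mem_filter.mp histar).2
      have hμfrac := hFfrac istar (Finset.mem_filter.mp histar).1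
      have htight : μ' istar = 0 ∨ μ' istar = 1 := by
        have hcr : c = r istar := hmin
        rcases lt_or_gt_of_ne hwne with hneg | hpos
        · left
          rw [hrval, if_neg (by linarith)] at hcr
          have hcw : c * w istar = -μ istar := by
            rw [hcr]; field_simp
          show μ istar + c * w istar = 0
          rw [hcw]; ring
        · right
          rw [hrval, if_pos hpos] at hcr
          have hcw : c * w istar = 1 - μ istar := by
            rw [hcr, div_mul_cancel₀ _ hwne]
          show μ istar + c * w istar = 1
          rw [hcw]; ring
      -- new fractional set is strictly smaller
      have hsubset : A.filter (fun i => μ' i ≠ 0 ∧ μ' i ≠ 1) ⊆ F.erase istar := by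
        intro i hi
        rw [Finset.mem_filter] at hi
        rw [Finset.mem_erase]
        constructor
        · intro h
          subst h
          rcases htight with h | h
          · exact hi.2.1 h
          · exact hi.2.2 h
        · by_contra hiF
          have hμeq : μ' i = μ i := by
            apply hsame
            intro hiG
            exact hiF (Finset.mem_filter.mp hiG).1
          by_cases hiA : i ∈ A
          · have : μ i = 0 ∨ μ i = 1 := by
              by_contra hcon
              push_neg at hcon
              exact hiF (by rw [hFdef, Finset.mem_filter]; exact ⟨hiA, hcon⟩)
            rcases this with h | h
            · exact hi.2.1 (hμeq.trans h)
            · exact hi.2.2 (hμeq.trans h)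
          · exact hi.2.1 (hμeq.trans (hsupp i hiA))
      have hcard' : (A.filter (fun i => μ' i ≠ 0 ∧ μ' i ≠ 1)).card ≤ k := by
        have h1 := Finset.card_le_card hsubset
        have h2 : (F.erase istar).card = F.card - 1 :=
          Finset.card_erase_of_mem (Finset.mem_filter.mp histar).1
        omega
      obtain ⟨μ'', h1, h2, h3, h4, h5⟩ := ih A μ' hcard' h01' hsupp' hsum' hker'
      exact ⟨μ'', h1, h2, h3, h4, h5⟩


lemma exists_chain_to {n : ℕ} (m : ℕ) : ∀ (S : Finset (Fin n)), S.card = m →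
    ∃ C : ℕ → Finset (Fin n), (∀ k, C k ⊆ C (k+1)) ∧ (∀ k, (C k).card = min k S.card) ∧
      (∀ k, C k ⊆ S) := by
  classical
  induction m with
  | zero =>
    intro S hS
    refine ⟨fun _ => ∅, by simp, by simp [Finset.card_eq_zero.mp hS], by simp⟩
  | succ m ih =>
    intro S hS
    have hne : S.Nonempty := by rw [← Finset.card_pos, hS]; omega
    obtain ⟨i0, hi0⟩ := hne
    set S' := S.erase i0 with hS'
    have hcard' : S'.card = m := by rw [hS', Finset.card_erase_of_mem hi0, hS]; omega
    obtain ⟨C', hchain', hcards', hsub'⟩ := ih S' hcard'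
    refine ⟨fun k => if k ≤ m then C' k else S, ?_, ?_, ?_⟩
    · intro k
      by_cases hk : k ≤ m
      · by_cases hk1 : k + 1 ≤ m
        · simpa [hk, hk1] using hchain' k
        · have : C' k ⊆ S := (hsub' k).trans (Finset.erase_subset _ _)
          simpa [hk, hk1] using this
      · have : ¬ (k + 1 ≤ m) := by omega
        simp [hk, this]
    · intro k
      by_cases hk : k ≤ m
      · have := hcards' k
        rw [hcard'] at this
        simp only [hk, if_pos]
        rw [this, hS]
        omega
      · simp only [hk, if_neg, not_false_iff]
        rw [hS]
        omega
    · intro k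
      by_cases hk : k ≤ m
      · simpa [hk] using (hsub' k).trans (Finset.erase_subset _ _)
      · simp [hk]


lemma bound_top {n d' : ℕ} (v : Fin n → Fin d' → ℚ) (R : ℚ)
    (hb : ∀ i j, |v i j| ≤ R) (A : Finset (Fin n)) (lam : Fin n → ℚ) (s : ℚ)
    (h01 : ∀ i, 0 ≤ lam i ∧ lam i ≤ 1) (hsupp : ∀ i ∉ A, lam i = 0)
    (hsum : (∑ i, lam i) = s)
    (hker : ∀ j, ∑ i, lam i * v i j = 0) :
    ∀ j, |∑ i ∈ A, v i j| ≤ ((A.card : ℚ) - s) * R := by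
  intro j
  have hkerA : ∑ i ∈ A, lam i * v i j = 0 := by
    rw [← hker j]
    exact Finset.sum_subset (Finset.subset_univ A)
      (fun i _ hi => by rw [hsupp i hi, zero_mul])
  have hsumA : ∑ i ∈ A, lam i = s := by
    rw [← hsum]
    exact Finset.sum_subset (Finset.subset_univ A) (fun i _ hi => hsupp i hi)
  have key : ∑ i ∈ A, v i j = ∑ i ∈ A, (1 - lam i) * v i j := by
    rw [Finset.sum_congr rfl (fun i _ => by ring : ∀ i ∈ A, (1 - lam i) * v i j = v i j - lam i * v i j)]
    rw [Finset.sum_sub_distrib, hkerA, sub_zero]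
  rw [key]
  calc |∑ i ∈ A, (1 - lam i) * v i j| ≤ ∑ i ∈ A, |(1 - lam i) * v i j| :=
        Finset.abs_sum_le_sum_abs _ _
    _ ≤ ∑ i ∈ A, (1 - lam i) * R := by
        apply Finset.sum_le_sum
        intro i _
        rw [abs_mul, abs_of_nonneg (by linarith [(h01 i).2] : (0:ℚ) ≤ 1 - lam i)]
        exact mul_le_mul_of_nonneg_left (hb i j) (by linarith [(h01 i).2])
    _ = ((A.card : ℚ) - s) * R := by
        simp only [sub_mul, one_mul]
        rw [Finset.sum_sub_distrib, ← Finset.sum_mul, hsumA, Finset.sum_const, nsmul_eq_mul]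


lemma chain_main {n d' : ℕ} (v : Fin n → Fin d' → ℚ) (R : ℚ) (hR : 0 ≤ R)
    (hb : ∀ i j, |v i j| ≤ R) :
    ∀ (m : ℕ) (A : Finset (Fin n)) (lam : Fin n → ℚ),
    A.card = m + d' → (∀ i, 0 ≤ lam i ∧ lam i ≤ 1) → (∀ i ∉ A, lam i = 0) →
    (∑ i, lam i) = (m : ℚ) → (∀ j, ∑ i, lam i * v i j = 0) →
    ∃ C : ℕ → Finset (Fin n), (∀ k, C k ⊆ C (k+1)) ∧ (∀ k, (C k).card = min k A.card) ∧
      (∀ k, C k ⊆ A) ∧ (∀ k j, |∑ i ∈ C k, v i j| ≤ (d' : ℚ) * R) := by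
  classical
  intro m
  induction m with
  | zero =>
    intro A lam hcard h01 hsupp hsum hker
    obtain ⟨C, hchain, hcards, hsub⟩ := exists_chain_to (d') A (by omega)
    refine ⟨C, hchain, hcards, hsub, ?_⟩
    intro k j
    calc |∑ i ∈ C k, v i j| ≤ ∑ i ∈ C k, |v i j| := Finset.abs_sum_le_sum_abs _ _
      _ ≤ ∑ i ∈ C k, R := Finset.sum_le_sum (fun i _ => hb i j)
      _ = ((C k).card : ℚ) * R := by rw [Finset.sum_const, nsmul_eq_mul]
      _ ≤ (d' : ℚ) * R := by
          apply mul_le_mul_of_nonneg_right _ hR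
          have := hcards k
          have h1 : (C k).card ≤ d' := by rw [this, hcard]; omega
          exact_mod_cast h1
  | succ m ih =>
    intro A lam hcard h01 hsupp hsum hker
    -- rescale to sum m
    set μ0 : Fin n → ℚ := fun i => ((m : ℚ)/(m+1)) * lam i with hμ0
    have hm1pos : (0:ℚ) < (m:ℚ) + 1 := by positivity
    have hfrac01 : (0:ℚ) ≤ (m:ℚ)/(m+1) ∧ (m:ℚ)/(m+1) ≤ 1 := by
      constructor
      · positivity
      · rw [div_le_one hm1pos]; linarith
    obtain ⟨μ', h01', hsupp', hsum', hker', i0, hi0A, hi0z⟩ :=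
      tighten v n A μ0
        (le_trans (Finset.card_le_card (Finset.filter_subset _ _)) (by simpa using Finset.card_le_univ A))
        (fun i => ⟨mul_nonneg hfrac01.1 (h01 i).1,
          le_trans (mul_le_mul_of_nonneg_left (h01 i).2 hfrac01.1) (by simpa using hfrac01.2)⟩)
        (fun i hi => by rw [hμ0]; simp [hsupp i hi])
        (by
          rw [hμ0]
          simp only
          rw [← Finset.mul_sum, hsum, hcard]
          push_cast
          field_simp
          ring)
        (by
          intro j
          simp only [hμ0, mul_assoc]
          rw [← Finset.mul_sum, hker j, mul_zero])
    set A' := A.erase i0 with hA'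
    have hcard' : A'.card = m + d' := by rw [hA', Finset.card_erase_of_mem hi0A, hcard]; omega
    have hsupp'' : ∀ i ∉ A', μ' i = 0 := by
      intro i hi
      by_cases hiA : i ∈ A
      · have : i = i0 := by
          by_contra hne
          exact hi (Finset.mem_erase.mpr ⟨hne, hiA⟩)
        rw [this]; exact hi0z
      · exact hsupp' i hiA
    have hsum'' : (∑ i, μ' i) = (m : ℚ) := by
      rw [hsum', hcard]; push_cast; ring
    obtain ⟨C', hchain', hcards', hsub', hbound'⟩ := ih A' μ' hcard' h01' hsupp'' hsum'' hker'
    refine ⟨fun k => if k ≤ m + d' then C' k else A, ?_, ?_, ?_, ?_⟩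
    · intro k
      by_cases hk : k ≤ m + d'
      · by_cases hk1 : k + 1 ≤ m + d'
        · simpa [hk, hk1] using hchain' k
        · have : C' k ⊆ A := (hsub' k).trans (Finset.erase_subset _ _)
          simpa [hk, hk1] using this
      · have : ¬ (k + 1 ≤ m + d') := by omega
        simp [hk, this]
    · intro k
      by_cases hk : k ≤ m + d'
      · have := hcards' k
        rw [hcard'] at this
        simp only [hk, if_pos]
        rw [this, hcard]
        omega
      · simp only [hk, if_neg, not_false_iff]
        rw [hcard]
        omega
    · intro k
      by_cases hk : k ≤ m + d'
      · simpa [hk] using (hsub' k).trans (Finset.erase_subset _ _)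
      · simp [hk]
    · intro k j
      by_cases hk : k ≤ m + d'
      · simpa [hk] using hbound' k j
      · simp only [hk, if_neg, not_false_iff]
        have := bound_top v R hb A lam ((m : ℚ) + 1) h01 hsupp (by rw [hsum]; push_cast; ring) hker j
        have hAc : ((A.card : ℚ) - ((m:ℚ)+1)) = (d' : ℚ) := by rw [hcard]; push_cast; ring
        rwa [hAc] at this


lemma sum_fiber {N t : ℕ} (idx : Fin N → Fin t) (S : Finset (Fin N)) {M : Type*}
    [AddCommMonoid M] (f : Fin t → M) :
    ∑ i ∈ S, f (idx i) = ∑ j : Fin t, ((S.filter (fun i => idx i = j)).card) • f j := by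
  classical
  rw [← Finset.sum_fiberwise_of_maps_to (g := idx) (fun i _ => Finset.mem_univ (idx i))]
  apply Finset.sum_congr rfl
  intro j _
  rw [Finset.sum_congr rfl (fun i hi => by rw [(Finset.mem_filter.mp hi).2])]
  exact Finset.sum_const (f j)

lemma exists_idx {t : ℕ} (nx : Fin t → ℕ) :
    ∃ idx : Fin (∑ i, nx i) → Fin t,
      ∀ j, (Finset.univ.filter (fun i => idx i = j)).card = nx j := by
  classical
  have hcard : Fintype.card (Σ j : Fin t, Fin (nx j)) = Fintype.card (Fin (∑ i, nx i)) := by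
    simp [Fintype.card_sigma]
  let e : (Σ j : Fin t, Fin (nx j)) ≃ Fin (∑ i, nx i) := Fintype.equivOfCardEq hcard
  refine ⟨fun i => (e.symm i).1, fun j => ?_⟩
  have h1 : (Finset.univ.filter (fun i => (e.symm i).1 = j)).card
      = (Finset.univ.filter (fun s : Σ j : Fin t, Fin (nx j) => s.1 = j)).card := by
    apply Finset.card_bij (fun i _ => e.symm i)
    · intro i hi
      simp only [Finset.mem_filter, Finset.mem_univ, true_and] at hi ⊢
      exact hi
    · intro i _ i' _ h
      exact e.symm.injective h
    · intro s hs
      refine ⟨e s, ?_, by simp⟩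
      simp only [Finset.mem_filter, Finset.mem_univ, true_and] at hs ⊢
      simpa using hs
  rw [h1]
  -- card of the sigma fiber
  rw [← Finset.card_fin (nx j)]
  refine Finset.card_bij'
    (fun s hs => Fin.cast (congrArg nx (Finset.mem_filter.mp hs).2) s.2)
    (fun a _ => (⟨j, a⟩ : Σ j : Fin t, Fin (nx j)))
    (fun s hs => Finset.mem_univ _)
    (fun a ha => Finset.mem_filter.mpr ⟨Finset.mem_univ _, rfl⟩) ?_ ?_
  · intro s hs
    obtain ⟨_, h2⟩ := Finset.mem_filter.mp hs
    obtain ⟨sj, sa⟩ := s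
    simp only at h2
    subst h2
    rfl
  · intro a ha
    apply Fin.ext
    simp


lemma exists_idx' {t N : ℕ} (nx : Fin t → ℕ) (h : N = ∑ i, nx i) :
    ∃ idx : Fin N → Fin t,
      ∀ j, (Finset.univ.filter (fun i => idx i = j)).card = nx j := by
  subst h; exact exists_idx nx

lemma extract {d t : ℕ} (hd : 1 ≤ d) (Δ Ξ : ℕ) (hΔ : 1 ≤ Δ) (hΞ : 1 ≤ Ξ)
    (D : Matrix (Fin d) (Fin t) ℤ) (hD : ∀ i j, |D i j| ≤ (Δ:ℤ))
    (b : Fin d → ℤ) (hb : ∀ j, |b j| ≤ (Ξ:ℤ))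
    (x : Fin t → ℤ) (hx : ∀ i, 0 ≤ x i) (hDx : D.mulVec x = b)
    (hbig : (((6*d*(Δ+Ξ))^d : ℕ) : ℤ) < ∑ i, x i) :
    ∃ y : Fin t → ℤ, y ≠ 0 ∧ (∀ i, 0 ≤ y i ∧ y i ≤ x i) ∧ D.mulVec y = 0 := by
  classical
  have hDxj : ∀ j, ∑ j', D j j' * x j' = b j := by
    intro j
    rw [← hDx]
    simp [Matrix.mulVec, dotProduct]
  set nx : Fin t → ℕ := fun i => (x i).toNat with hnxdef
  have hnx : ∀ i, (nx i : ℤ) = x i := fun i => Int.toNat_of_nonneg (hx i)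
  set N := ∑ i, nx i with hNdef
  obtain ⟨idx, hidx⟩ := exists_idx' nx hNdef
  have hNx : (N : ℤ) = ∑ i, x i := by
    rw [hNdef]
    push_cast
    exact Finset.sum_congr rfl (fun i _ => hnx i)
  have hNbig : (6*d*(Δ+Ξ))^d < N := by
    have : (((6*d*(Δ+Ξ))^d : ℕ) : ℤ) < (N : ℤ) := by rw [hNx]; exact hbig
    exact_mod_cast this
  have hbase : 1 ≤ 6*d*(Δ+Ξ) := by nlinarith
  have hXne : 1 ≤ (6*d*(Δ+Ξ))^d := Nat.one_le_pow _ _ (by omega)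
  have hN1 : 1 ≤ N := by omega
  have hNd : d ≤ N := by
    have h1 : d ≤ 6*d*(Δ+Ξ) := by nlinarith
    have h2 : 6*d*(Δ+Ξ) ≤ (6*d*(Δ+Ξ))^d := Nat.le_self_pow (by omega) _
    omega
  have hNQ : (0:ℚ) < (N:ℚ) := by exact_mod_cast hN1
  -- the rational step vectors
  set v : Fin N → Fin d → ℚ := fun i j => ((D j (idx i) : ℤ) : ℚ) - ((b j : ℤ) : ℚ)/(N:ℚ)
    with hvdef
  set R : ℚ := (Δ : ℚ) + (Ξ : ℚ) with hRdef
  have hR : 0 ≤ R := by positivity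
  have hbQ : ∀ j, |((b j : ℤ) : ℚ)| ≤ (Ξ:ℚ) := by
    intro j
    have := hb j
    rw [← Int.cast_abs]
    exact_mod_cast this
  have hbN : ∀ j, |((b j : ℤ) : ℚ)/(N:ℚ)| ≤ (Ξ:ℚ) := by
    intro j
    rw [abs_div, abs_of_pos hNQ, div_le_iff₀ hNQ]
    calc |((b j : ℤ) : ℚ)| ≤ (Ξ:ℚ) := hbQ j
      _ ≤ (Ξ:ℚ) * N := le_mul_of_one_le_right (by positivity) (by exact_mod_cast hN1)
  have hvb : ∀ i j, |v i j| ≤ R := by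
    intro i j
    rw [hvdef]
    simp only
    calc |((D j (idx i) : ℤ) : ℚ) - ((b j : ℤ) : ℚ)/(N:ℚ)|
        ≤ |((D j (idx i) : ℤ) : ℚ)| + |((b j : ℤ) : ℚ)/(N:ℚ)| := abs_sub _ _
      _ ≤ (Δ:ℚ) + (Ξ:ℚ) := by
          apply add_le_add _ (hbN j)
          rw [← Int.cast_abs]
          exact_mod_cast hD j (idx i)
  -- sum of v is zero
  have hsumD : ∀ j, ∑ i : Fin N, ((D j (idx i) : ℤ) : ℚ) = ((b j : ℤ) : ℚ) := by
    intro j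
    rw [sum_fiber idx Finset.univ (fun j' => ((D j j' : ℤ) : ℚ))]
    rw [← hDxj j]
    push_cast
    apply Finset.sum_congr rfl
    intro j' _
    rw [hidx j', nsmul_eq_mul]
    have hc : ((nx j' : ℕ) : ℚ) = ((x j' : ℤ) : ℚ) := by exact_mod_cast hnx j'
    rw [hc]; ring
  have hsumv : ∀ j, ∑ i : Fin N, v i j = 0 := by
    intro j
    rw [hvdef]
    simp only
    rw [Finset.sum_sub_distrib, hsumD j, Finset.sum_const, Finset.card_univ, Fintype.card_fin,
      nsmul_eq_mul, mul_div_cancel₀ _ (ne_of_gt hNQ)]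
    ring
  -- apply the chain lemma
  set lam : Fin N → ℚ := fun _ => ((N:ℚ) - (d:ℚ))/(N:ℚ) with hlamdef
  have hcast : (((N - d : ℕ)) : ℚ) = (N:ℚ) - (d:ℚ) := by
    push_cast [Nat.cast_sub hNd]
    ring
  obtain ⟨C, hchain, hcards, hsub, hbound⟩ :=
    chain_main v R hR hvb (N - d) Finset.univ lam
      (by rw [Finset.card_univ, Fintype.card_fin]; omega)
      (by
        intro i
        constructor
        · apply div_nonneg _ (le_of_lt hNQ)
          have : (d:ℚ) ≤ (N:ℚ) := by exact_mod_cast hNd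
          linarith
        · rw [div_le_one hNQ]
          have : (0:ℚ) ≤ (d:ℚ) := by positivity
          linarith)
      (fun i hi => absurd (Finset.mem_univ i) hi)
      (by
        rw [Finset.sum_const, Finset.card_univ, Fintype.card_fin, nsmul_eq_mul, hcast,
          mul_div_cancel₀ _ (ne_of_gt hNQ)])
      (by
        intro j
        rw [← Finset.mul_sum, hsumv j, mul_zero])
  -- integer partial sums
  set u : ℕ → Fin d → ℤ := fun k j => ∑ i ∈ C k, D j (idx i) with hudef
  set P : ℕ := (d+1)*(Δ+Ξ) with hPdef
  have hcardCle : ∀ k, (C k).card ≤ N := by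
    intro k
    rw [hcards k, Finset.card_univ, Fintype.card_fin]
    omega
  have huP : ∀ k j, u k j ∈ Finset.Icc (-(P:ℤ)) (P:ℤ) := by
    intro k j
    have hQ : ((u k j : ℤ) : ℚ) = (∑ i ∈ C k, v i j) + ((C k).card : ℚ) * (((b j : ℤ) : ℚ)/(N:ℚ)) := by
      rw [hudef, hvdef]
      simp only
      rw [Finset.sum_sub_distrib, Finset.sum_const, nsmul_eq_mul]
      push_cast
      ring
    have habs : |((u k j : ℤ) : ℚ)| ≤ (P:ℚ) := by
      rw [hQ]
      calc |(∑ i ∈ C k, v i j) + ((C k).card : ℚ) * (((b j : ℤ) : ℚ)/(N:ℚ))|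
          ≤ |∑ i ∈ C k, v i j| + |((C k).card : ℚ) * (((b j : ℤ) : ℚ)/(N:ℚ))| := abs_add_le _ _
        _ ≤ (d:ℚ) * R + (Ξ:ℚ) := by
            apply add_le_add (hbound k j)
            rw [abs_mul, abs_of_nonneg (by positivity : (0:ℚ) ≤ ((C k).card : ℚ))]
            calc ((C k).card : ℚ) * |((b j : ℤ) : ℚ)/(N:ℚ)|
                ≤ (N:ℚ) * |((b j : ℤ) : ℚ)/(N:ℚ)| := by
                  apply mul_le_mul_of_nonneg_right _ (abs_nonneg _)
                  exact_mod_cast hcardCle k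
              _ = |((b j : ℤ) : ℚ)| := by
                  rw [abs_div, abs_of_pos hNQ]
                  field_simp
              _ ≤ (Ξ:ℚ) := hbQ j
        _ ≤ (P:ℚ) := by
            rw [hPdef, hRdef]
            push_cast
            nlinarith [hd]
    rw [Finset.mem_Icc]
    rw [← Int.cast_abs] at habs
    have habs' : |u k j| ≤ (P:ℤ) := by exact_mod_cast habs
    constructor <;> [linarith [neg_abs_le (u k j)]; linarith [le_abs_self (u k j)]]
  -- pigeonhole
  set box : Finset (Fin d → ℤ) := Fintype.piFinset (fun _ : Fin d => Finset.Icc (-(P:ℤ)) (P:ℤ))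
    with hboxdef
  have hIcc : (Finset.Icc (-(P:ℤ)) (P:ℤ)).card = 2*P+1 := by
    rw [Int.card_Icc]
    omega
  have hboxcard : box.card = (2*P+1)^d := by
    rw [hboxdef, Fintype.card_piFinset]
    simp [hIcc]
  have hPsmall : 2*P+1 ≤ 6*d*(Δ+Ξ) := by
    rw [hPdef]
    nlinarith
  have hboxlt : box.card < (Finset.range (N+1)).card := by
    rw [hboxcard, Finset.card_range]
    have := Nat.pow_le_pow_left hPsmall d
    omega
  obtain ⟨k, hk, l, hl, hkl, hukl⟩ :=
    Finset.exists_ne_map_eq_of_card_lt_of_maps_to hboxlt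
      (fun k _ => by
        rw [hboxdef, Finset.mem_coe, Fintype.mem_piFinset]
        intro j
        exact huP k j)
  rw [Finset.mem_range] at hk hl
  -- wlog k < l
  wlog hlt : k < l generalizing k l
  · exact this l hl k hk (Ne.symm hkl) hukl.symm (by omega)
  have hmono : ∀ a c : ℕ, a ≤ c → C a ⊆ C c := by
    intro a c hac
    induction c, hac using Nat.le_induction with
    | base => exact subset_rfl
    | succ c hac ih => exact ih.trans (hchain c)
  have hCkl : C k ⊆ C l := hmono k l (le_of_lt hlt)
  set S := C l \ C k with hSdef
  have hScard : S.card = l - k := by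
    rw [hSdef, Finset.card_sdiff, Finset.inter_eq_left.mpr hCkl, hcards k, hcards l, Finset.card_univ, Fintype.card_fin]
    omega
  have hSne : S.Nonempty := by
    rw [← Finset.card_pos, hScard]
    omega
  set y : Fin t → ℤ := fun j' => ((S.filter (fun i => idx i = j')).card : ℤ) with hydef
  refine ⟨y, ?_, ?_, ?_⟩
  · -- y ≠ 0
    obtain ⟨i0, hi0⟩ := hSne
    intro hy
    have h0 := congrFun hy (idx i0)
    rw [hydef] at h0
    simp only [Pi.zero_apply] at h0
    have : (S.filter (fun i => idx i = idx i0)).Nonempty := ⟨i0, Finset.mem_filter.mpr ⟨hi0, rfl⟩⟩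
    rw [← Finset.card_pos] at this
    omega
  · -- bounds
    intro j'
    constructor
    · rw [hydef]; positivity
    · rw [hydef, ← hnx j', ← hidx j']
      show ((S.filter (fun i => idx i = j')).card : ℤ) ≤ _
      have hsub' : S.filter (fun i => idx i = j') ⊆ Finset.univ.filter (fun i => idx i = j') :=
        Finset.filter_subset_filter _ (Finset.subset_univ _)
      exact_mod_cast Finset.card_le_card hsub'
  · -- D y = 0
    funext j
    show ∑ j', D j j' * y j' = 0
    have hfib := sum_fiber idx S (fun j' => D j j')
    have h1 : ∑ j', D j j' * y j' = ∑ i ∈ S, D j (idx i) := by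
      rw [hfib]
      apply Finset.sum_congr rfl
      intro j' _
      rw [hydef]
      simp only
      rw [nsmul_eq_mul]
      ring
    have h2 : ∑ i ∈ S, D j (idx i) = u l j - u k j := by
      rw [hudef]
      simp only
      rw [hSdef, Finset.sum_sdiff_eq_sub hCkl]
    rw [h1, h2, congrFun hukl j, sub_self]


lemma sum_pos_of_ne {t : ℕ} (y : Fin t → ℤ) (hy0 : y ≠ 0) (hy : ∀ i, 0 ≤ y i) :
    1 ≤ ∑ i, y i := by
  obtain ⟨i0, hi0⟩ := Function.ne_iff.mp hy0
  have h1 : 1 ≤ y i0 := by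
    have := hy i0
    simp only [Pi.zero_apply] at hi0
    omega
  calc (1:ℤ) ≤ y i0 := h1
    _ ≤ ∑ i, y i := Finset.single_le_sum (fun i _ => hy i) (Finset.mem_univ i0)

lemma shrink {d t : ℕ} (hd : 1 ≤ d) (Δ Ξ : ℕ) (hΔ : 1 ≤ Δ) (hΞ : 1 ≤ Ξ)
    (D : Matrix (Fin d) (Fin t) ℤ) (hD : ∀ i j, |D i j| ≤ (Δ:ℤ))
    (b : Fin d → ℤ) (hb : ∀ j, |b j| ≤ (Ξ:ℤ)) :
    ∀ (n : ℕ) (x : Fin t → ℤ), (∀ i, 0 ≤ x i) → D.mulVec x = b →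
      (∑ i, x i).toNat ≤ n →
    ∃ xbar : Fin t → ℤ, (∀ i, 0 ≤ xbar i) ∧ D.mulVec xbar = b ∧
      (∀ i, xbar i ≤ x i) ∧ (∑ i, xbar i) ≤ (((6*d*(Δ+Ξ))^d : ℕ) : ℤ) := by
  intro n
  induction n with
  | zero =>
    intro x hx hDx hn
    refine ⟨x, hx, hDx, fun i => le_rfl, ?_⟩
    have h1 : (0:ℤ) ≤ ∑ i, x i := Finset.sum_nonneg (fun i _ => hx i)
    have h2 : (0:ℤ) ≤ (((6*d*(Δ+Ξ))^d : ℕ) : ℤ) := by positivity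
    omega
  | succ n ih =>
    intro x hx hDx hn
    by_cases hS : ∑ i, x i ≤ (((6*d*(Δ+Ξ))^d : ℕ) : ℤ)
    · exact ⟨x, hx, hDx, fun i => le_rfl, hS⟩
    · push_neg at hS
      obtain ⟨y, hy0, hyb, hDy⟩ := extract hd Δ Ξ hΔ hΞ D hD b hb x hx hDx hS
      have hy1 : 1 ≤ ∑ i, y i := sum_pos_of_ne y hy0 (fun i => (hyb i).1)
      set x' : Fin t → ℤ := x - y with hx'def
      have hx' : ∀ i, 0 ≤ x' i := by
        intro i
        simp only [hx'def, Pi.sub_apply]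
        linarith [(hyb i).2]
      have hDx' : D.mulVec x' = b := by
        rw [hx'def, Matrix.mulVec_sub, hDy, hDx, sub_zero]
      have hsum' : ∑ i, x' i = (∑ i, x i) - ∑ i, y i := by
        simp only [hx'def, Pi.sub_apply]
        rw [Finset.sum_sub_distrib]
      have hnonneg' : (0:ℤ) ≤ ∑ i, x' i := Finset.sum_nonneg (fun i _ => hx' i)
      have hn' : (∑ i, x' i).toNat ≤ n := by omega
      obtain ⟨xbar, h1, h2, h3, h4⟩ := ih x' hx' hDx' hn'
      refine ⟨xbar, h1, h2, fun i => ?_, h4⟩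
      calc xbar i ≤ x' i := h3 i
        _ ≤ x i := by simp only [hx'def, Pi.sub_apply]; linarith [(hyb i).1]

lemma graver_decomp {d t : ℕ} (D : Matrix (Fin d) (Fin t) ℤ) :
    ∀ (n : ℕ) (z : Fin t → ℤ), (∀ i, 0 ≤ z i) → D.mulVec z = 0 →
      (∑ i, z i).toNat ≤ n →
    ∃ μ : Multiset (Fin t → ℤ), (∀ g ∈ μ, g ∈ Graver D ∧ ∀ i, 0 ≤ g i) ∧ z = μ.sum := by
  classical
  intro n
  induction n with
  | zero =>
    intro z hz hDz hn
    have hz0 : z = 0 := by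
      funext i
      have h1 : z i ≤ ∑ i', z i' := Finset.single_le_sum (fun i' _ => hz i') (Finset.mem_univ i)
      have h2 : (0:ℤ) ≤ ∑ i', z i' := Finset.sum_nonneg (fun i' _ => hz i')
      have := hz i
      simp only [Pi.zero_apply]
      omega
    exact ⟨0, by simp, by simp [hz0]⟩
  | succ n ih =>
    intro z hz hDz hn
    by_cases hz0 : z = 0
    · exact ⟨0, by simp, by simp [hz0]⟩
    · -- select a sum-minimal nonzero nonnegative kernel vector below z
      set Q : (Fin t → ℤ) → Prop :=
        fun g => g ≠ 0 ∧ (∀ i, 0 ≤ g i ∧ g i ≤ z i) ∧ D.mulVec g = 0 with hQdef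
      have hPex : ∃ m : ℕ, ∃ g, Q g ∧ (∑ i, g i).toNat = m :=
        ⟨(∑ i, z i).toNat, z, ⟨hz0, fun i => ⟨hz i, le_rfl⟩, hDz⟩, rfl⟩
      obtain ⟨g, hQg, hgm⟩ := Nat.find_spec hPex
      have hmin : ∀ h', Q h' → Nat.find hPex ≤ (∑ i, h' i).toNat := by
        intro h' hQ'
        exact Nat.find_min' hPex ⟨h', hQ', rfl⟩
      obtain ⟨hg0, hgb, hDg⟩ := hQg
      have hg1 : 1 ≤ ∑ i, g i := sum_pos_of_ne g hg0 (fun i => (hgb i).1)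
      -- g is a Graver element
      have hGraver : g ∈ Graver D := by
        refine ⟨hg0, hDg, ?_⟩
        intro h hh0 hDh hconf
        have hhb : ∀ i, 0 ≤ h i ∧ h i ≤ g i := by
          intro i
          obtain ⟨hc1, hc2⟩ := hconf i
          have hgi := (hgb i).1
          by_cases hgz : g i = 0
          · rw [hgz] at hc2
            simp only [abs_zero] at hc2
            have : h i = 0 := abs_nonpos_iff.mp (by omega)
            omega
          · have hgpos : 0 < g i := lt_of_le_of_ne hgi (Ne.symm hgz)
            have hhnn : 0 ≤ h i := by nlinarith
            rw [abs_of_nonneg hhnn, abs_of_nonneg hgi] at hc2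
            exact ⟨hhnn, hc2⟩
        have hQh : Q h := ⟨hh0, fun i => ⟨(hhb i).1, le_trans (hhb i).2 (hgb i).2⟩, hDh⟩
        have hle : ∑ i, h i ≤ ∑ i, g i := Finset.sum_le_sum (fun i _ => (hhb i).2)
        have hhn : (0:ℤ) ≤ ∑ i, h i := Finset.sum_nonneg (fun i _ => (hhb i).1)
        have hgeq : ∑ i, h i = ∑ i, g i := by
          have := hmin h hQh
          omega
        funext i
        by_contra hne
        have hlt : h i < g i := lt_of_le_of_ne (hhb i).2 hne
        have : ∑ i', h i' < ∑ i', g i' :=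
          Finset.sum_lt_sum (fun i' _ => (hhb i').2) ⟨i, Finset.mem_univ i, hlt⟩
        omega
      -- recurse on z - g
      set z' : Fin t → ℤ := z - g with hz'def
      have hz' : ∀ i, 0 ≤ z' i := by
        intro i
        simp only [hz'def, Pi.sub_apply]
        linarith [(hgb i).2]
      have hDz' : D.mulVec z' = 0 := by
        rw [hz'def, Matrix.mulVec_sub, hDg, hDz, sub_zero]
      have hsum' : ∑ i, z' i = (∑ i, z i) - ∑ i, g i := by
        simp only [hz'def, Pi.sub_apply]
        rw [Finset.sum_sub_distrib]
      have hnn' : (0:ℤ) ≤ ∑ i, z' i := Finset.sum_nonneg (fun i _ => hz' i)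
      have hn' : (∑ i, z' i).toNat ≤ n := by omega
      obtain ⟨μ', hμ', hzsum⟩ := ih z' hz' hDz' hn'
      refine ⟨g ::ₘ μ', ?_, ?_⟩
      · intro g' hg'
        rcases Multiset.mem_cons.mp hg' with h | h
        · rw [h]
          exact ⟨hGraver, fun i => (hgb i).1⟩
        · exact hμ' g' h
      · rw [Multiset.sum_cons, ← hzsum, hz'def]
        ring

/-- There is a universal constant `c > 0` such that for all `d, t ≥ 1` and
`Δ, Ξ ≥ 1`: whenever `D ∈ ℤ^{d×t}` has entries bounded by `Δ`, `b ∈ ℤᵈ` has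
`∞`-norm at most `Ξ` and `x ∈ ℤ₊ᵗ` satisfies `D x = b`, there are a nonnegative
solution `x̄` of `D x̄ = b` with `‖x̄‖_∞ ≤ (c·d·(Δ+Ξ))^d` and a finite multiset `μ`
of nonnegative Graver basis elements of `D` with `x = x̄ + Σ_{g ∈ μ} g`. -/
theorem solution_decomposition :
    ∃ c : ℕ, 0 < c ∧ ∀ d t Δ Ξ : ℕ, 1 ≤ d → 1 ≤ t → 1 ≤ Δ → 1 ≤ Ξ →
      ∀ D : Matrix (Fin d) (Fin t) ℤ, (∀ i j, |D i j| ≤ (Δ : ℤ)) →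
      ∀ b : Fin d → ℤ, (∀ j, |b j| ≤ (Ξ : ℤ)) →
      ∀ x : Fin t → ℤ, (∀ i, 0 ≤ x i) → D.mulVec x = b →
        ∃ xbar : Fin t → ℤ, (∀ i, 0 ≤ xbar i) ∧ D.mulVec xbar = b ∧
          (∀ i, |xbar i| ≤ ((c * d * (Δ + Ξ) : ℕ) : ℤ) ^ d) ∧
          ∃ μ : Multiset (Fin t → ℤ),
            (∀ g ∈ μ, g ∈ Graver D ∧ ∀ i, 0 ≤ g i) ∧
            x = xbar + μ.sum := by
  refine ⟨6, by norm_num, ?_⟩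
  intro d t Δ Ξ hd ht hΔ hΞ D hD b hb x hx hDx
  obtain ⟨xbar, h1, h2, h3, h4⟩ :=
    shrink hd Δ Ξ hΔ hΞ D hD b hb (∑ i, x i).toNat x hx hDx le_rfl
  have hzb : ∀ i, 0 ≤ (x - xbar) i := by
    intro i
    simp only [Pi.sub_apply]
    linarith [h3 i]
  have hbound : ∀ i, |xbar i| ≤ ((6 * d * (Δ + Ξ) : ℕ) : ℤ) ^ d := by
    intro i
    rw [abs_of_nonneg (h1 i)]
    calc xbar i ≤ ∑ i', xbar i' :=
          Finset.single_le_sum (fun i' _ => h1 i') (Finset.mem_univ i)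
      _ ≤ (((6*d*(Δ+Ξ))^d : ℕ) : ℤ) := h4
      _ = ((6 * d * (Δ + Ξ) : ℕ) : ℤ) ^ d := by push_cast; ring
  obtain ⟨μ, hμ, hsum⟩ := graver_decomp D (∑ i, (x - xbar) i).toNat (x - xbar)
    hzb (by rw [Matrix.mulVec_sub, hDx, h2, sub_self]) le_rfl
  refine ⟨xbar, h1, h2, hbound, μ, hμ, ?_⟩
  rw [← hsum]
  funext i
  simp
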